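/- In the coNP-hardness construction for nonwastefulness verification: given a 4-Partition instance W = {w_1,…,w_{4m}} with target θ (Σ w = mθ, θ/5 < w_i < θ/3), consider the SPR instance with projects p_1,…,p_{m+2}, where each p_i (i ≤ m) has θ students acceptable only to it, p_{m+1} has mθ such students, p_{m+2} has mθ + m such students; resources are r_{x_1},…,r_{x_m} with capacity θ+1 and compatibility {p_i, p_{m+2}}, resources r_1,…,r_{4m} with capacities w_1,…,w_{4m} compatible with {p_1,…,p_{m+1}}, and r_z with capacity mθ + m − 1 compatible with {p_{m+1}, p_{m+2}}. Let (Y, μ) be the feasible matching in which μ(r_{x_i}) = p_i, μ(r_i) = p_{m+1}, μ(r_z) = p_{m+2}, all students are matched except one student s* who wants p_{m+2}. Then (s*, p_{m+2}) is a claiming pair if and only if W admits a 4-partition into m subsets each summing to θ. -/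

import Mathlib

open scoped Classical
open Finset

/-- A Student-Project-Resource (SPR) instance.  Students have strict preferences
over `Option P` (`none` = being unmatched, ∅), projects over `Option S`.
Each resource has a positive capacity and a set of compatible projects. -/
structure SPR (S P R : Type) [Fintype S] [Fintype R] where
  prefS : S → Option P → Option P → Prop
  prefP : P → Option S → Option S → Prop
  q : R → ℕ
  qpos : ∀ r, 0 < q r
  T : R → Set P

namespace SPR

variable {S P R : Type} [Fintype S] [Fintype R] (I : SPR S P R)

/-- Project `p` is acceptable to student `s`. -/
def accS (s : S) (p : P) : Prop := I.prefS s (some p) none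

/-- Student `s` is acceptable to project `p`. -/
def accP (p : P) (s : S) : Prop := I.prefP p (some s) none

/-- A matching assigns each student at most one project, acceptable to both. -/
def IsMatching (Y : S → Option P) : Prop :=
  ∀ s p, Y s = some p → I.accS s p ∧ I.accP p s

/-- An allocation maps every resource to a compatible project. -/
def IsAlloc (μ : R → P) : Prop := ∀ r, μ r ∈ I.T r

/-- Total capacity provided to project `p` by allocation `μ`. -/
noncomputable def cap (μ : R → P) (p : P) : ℕ :=
  ∑ r ∈ univ.filter (fun r => μ r = p), I.q r

/-- Number of students matched to project `p` in matching `Y`. -/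
noncomputable def assigned (Y : S → Option P) (p : P) : ℕ :=
  (univ.filter (fun s => Y s = some p)).card

/-- `(Y, μ)` is feasible. -/
def Feasible (Y : S → Option P) (μ : R → P) : Prop :=
  I.IsMatching Y ∧ I.IsAlloc μ ∧ ∀ p, SPR.assigned Y p ≤ I.cap μ p

/-- `(s, p)` is a claiming pair of matching `Y`. -/
def ClaimingPair (Y : S → Option P) (s : S) (p : P) : Prop :=
  I.accP p s ∧ Y s ≠ some p ∧ I.prefS s (some p) (Y s) ∧
    ∃ μ', I.Feasible (Function.update Y s (some p)) μ'

/-- `(s, p)` is an envious pair of matching `Y`. -/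
def EnviousPair (Y : S → Option P) (s : S) (p : P) : Prop :=
  I.accP p s ∧ Y s ≠ some p ∧ I.prefS s (some p) (Y s) ∧
    ∃ s', Y s' = some p ∧ I.prefP p (some s) (some s')

def Nonwasteful (Y : S → Option P) (μ : R → P) : Prop :=
  I.Feasible Y μ ∧ ∀ s p, ¬ I.ClaimingPair Y s p

def Fair (Y : S → Option P) (μ : R → P) : Prop :=
  I.Feasible Y μ ∧ ∀ s p, ¬ I.EnviousPair Y s p

def Stable (Y : S → Option P) (μ : R → P) : Prop :=
  I.Nonwasteful Y μ ∧ I.Fair Y μ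

/-- `Y'` Pareto dominates `Y` (students all weakly better, one strictly). -/
def ParetoDom (Y' Y : S → Option P) : Prop :=
  (∀ s, Y' s = Y s ∨ I.prefS s (Y' s) (Y s)) ∧ ∃ s, I.prefS s (Y' s) (Y s)

/-- `Y` is Pareto efficient among feasible matchings. -/
def ParetoEfficient (Y : S → Option P) : Prop :=
  ∀ Y' μ', I.Feasible Y' μ' → ¬ I.ParetoDom Y' Y

end SPR

/-- Students of the Theorem 2/Figure 1 construction: for each `i < m` a group of `θ`
students acceptable only to `p_i`, then `mθ` students acceptable only to `p_{m+1}`,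
then `mθ + m` students acceptable only to `p_{m+2}`. -/
abbrev Stud8 (m θ : ℕ) := (Fin m × Fin θ) ⊕ Fin (m * θ) ⊕ Fin (m * θ + m)

/-- The unique acceptable project of each student. -/
def proj8 {m θ : ℕ} : Stud8 m θ → Fin (m + 2)
  | Sum.inl (i, _) => ⟨i.1, by omega⟩
  | Sum.inr (Sum.inl _) => ⟨m, by omega⟩
  | Sum.inr (Sum.inr _) => ⟨m + 1, by omega⟩

/-- Resources: `r_{x_1},…,r_{x_m}`, then `r_1,…,r_{4m}` (the 4-Partition weights),
then `r_z`. -/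
abbrev Res8 (m : ℕ) := Fin m ⊕ Fin (4 * m) ⊕ Unit

/-- The SPR instance of the coNP-hardness construction for nonwastefulness
verification (Figure 1). -/
noncomputable def hardSPR (m θ : ℕ) (w : Fin (4 * m) → ℕ)
    (hm : 0 < m) (hθ : 0 < θ) (hw : ∀ i, 0 < w i) :
    SPR (Stud8 m θ) (Fin (m + 2)) (Res8 m) where
  prefS := fun s a b =>
    (fun o => match o with
      | none => 1
      | some p => if p = proj8 s then 2 else 0 : Option (Fin (m + 2)) → ℕ) b <
    (fun o => match o with
      | none => 1
      | some p => if p = proj8 s then 2 else 0) a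
  prefP := fun p a b =>
    (fun o => match o with
      | none => 1
      | some (s : Stud8 m θ) => if proj8 s = p then 2 else 0 : Option (Stud8 m θ) → ℕ) b <
    (fun o => match o with
      | none => 1
      | some s => if proj8 s = p then 2 else 0) a
  q := fun r => match r with
    | Sum.inl _ => θ + 1
    | Sum.inr (Sum.inl i) => w i
    | Sum.inr (Sum.inr _) => m * θ + m - 1
  qpos := by
    rintro (r | r | r) <;> dsimp only
    · omega
    · exact hw r
    · have h1 : 0 < m * θ := Nat.mul_pos hm hθ
      omega
  T := fun r => match r with
    | Sum.inl i => {p | (p : ℕ) = (i : ℕ) ∨ (p : ℕ) = m + 1}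
    | Sum.inr (Sum.inl _) => {p | (p : ℕ) ≤ m}
    | Sum.inr (Sum.inr _) => {p | (p : ℕ) = m ∨ (p : ℕ) = m + 1}

/-- The distinguished unmatched student `s*` (the first student of the `p_{m+2}` group). -/
def sstar (m θ : ℕ) (hm : 0 < m) : Stud8 m θ :=
  Sum.inr (Sum.inr ⟨0, by positivity⟩)

/-- The given matching `Y`: everyone is matched to her unique acceptable project
except `s*`. -/
def Y8 (m θ : ℕ) (hm : 0 < m) : Stud8 m θ → Option (Fin (m + 2)) :=
  fun s => if s = sstar m θ hm then none else some (proj8 s)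

/-- The given allocation `μ`: `μ(r_{x_i}) = p_i`, `μ(r_i) = p_{m+1}`, `μ(r_z) = p_{m+2}`. -/
def μ8 (m : ℕ) : Res8 m → Fin (m + 2)
  | Sum.inl i => ⟨i.1, by omega⟩
  | Sum.inr (Sum.inl _) => ⟨m, by omega⟩
  | Sum.inr (Sum.inr _) => ⟨m + 1, by omega⟩


section Aux

variable {m θ : ℕ} {w : Fin (4 * m) → ℕ}
  {hm : 0 < m} {hθ : 0 < θ} {hw : ∀ i, 0 < w i}

lemma hard_cap_split (μ' : Res8 m → Fin (m + 2)) (p : Fin (m + 2)) :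
    (hardSPR m θ w hm hθ hw).cap μ' p =
      (∑ i : Fin m, if μ' (Sum.inl i) = p then θ + 1 else 0) +
      ((∑ j : Fin (4 * m), if μ' (Sum.inr (Sum.inl j)) = p then w j else 0) +
      (if μ' (Sum.inr (Sum.inr ())) = p then m * θ + m - 1 else 0)) := by
  rw [SPR.cap, Finset.sum_filter, Fintype.sum_sum_type, Fintype.sum_sum_type]
  simp [hardSPR]
  convert rfl

lemma ite_fin_eq (a : ℕ) (ha : a < m + 2) (p : Fin (m + 2)) (c : ℕ) :
    (if (⟨a, ha⟩ : Fin (m + 2)) = p then c else 0) = if (p : ℕ) = a then c else 0 := by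
  simp [Fin.ext_iff, eq_comm]

lemma sum_fin_ite' (c v : ℕ) :
    (∑ i : Fin m, if v = (i : ℕ) then c else 0) = if v < m then c else 0 := by
  by_cases hv : v < m
  · rw [if_pos hv]
    calc ∑ i : Fin m, (if v = (i : ℕ) then c else 0)
        = ∑ i : Fin m, (if i = ⟨v, hv⟩ then c else 0) := by
          refine Finset.sum_congr rfl fun i _ => ?_
          refine if_congr ?_ rfl rfl
          constructor
          · intro h; exact Fin.ext h.symm
          · intro h; subst h; rfl
      _ = c := by rw [Finset.sum_ite_eq']; simp
  · rw [if_neg hv]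
    apply Finset.sum_eq_zero
    intro i _
    rw [if_neg]
    have := i.2
    omega

lemma hard_assigned_proj (p : Fin (m + 2)) :
    SPR.assigned (fun s : Stud8 m θ => some (proj8 s)) p =
      (if (p : ℕ) < m then θ else 0) + (if (p : ℕ) = m then m * θ else 0) +
        (if (p : ℕ) = m + 1 then m * θ + m else 0) := by
  rw [SPR.assigned, Finset.card_filter, Fintype.sum_sum_type, Fintype.sum_sum_type,
    Fintype.sum_prod_type]
  simp only [proj8, Option.some.injEq, ite_fin_eq, Finset.sum_const, Finset.card_univ,
    Fintype.card_fin, smul_eq_mul, mul_ite, mul_one, mul_zero]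
  rw [sum_fin_ite']
  ring

lemma assigned_mono {S P : Type} [Fintype S] (Y Y' : S → Option P) (p : P)
    (h : ∀ s, Y s = some p → Y' s = some p) :
    SPR.assigned Y p ≤ SPR.assigned Y' p := by
  apply Finset.card_le_card
  intro s hs
  simp only [Finset.mem_filter, Finset.mem_univ, true_and] at hs ⊢
  exact h s hs

lemma assigned_lt {S P : Type} [Fintype S] (Y Y' : S → Option P) (p : P) (s0 : S)
    (h : ∀ s, Y s = some p → Y' s = some p) (h0 : Y s0 ≠ some p) (h1 : Y' s0 = some p) :
    SPR.assigned Y p + 1 ≤ SPR.assigned Y' p := by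
  rw [SPR.assigned, SPR.assigned]
  have hmem : s0 ∈ Finset.univ.filter (fun s => Y' s = some p) := by
    simp only [Finset.mem_filter, Finset.mem_univ, true_and]
    exact h1
  have hsub : Finset.univ.filter (fun s => Y s = some p) ⊆
      (Finset.univ.filter (fun s => Y' s = some p)).erase s0 := by
    intro s hs
    simp only [Finset.mem_filter, Finset.mem_univ, true_and, Finset.mem_erase] at hs ⊢
    exact ⟨fun he => h0 (he ▸ hs), h s hs⟩
  have h2 := Finset.card_le_card hsub
  rw [Finset.card_erase_of_mem hmem] at h2
  have hpos : 0 < (Finset.univ.filter (fun s => Y' s = some p)).card :=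
    Finset.card_pos.mpr ⟨s0, hmem⟩
  omega

end Aux

lemma all_max (m c : ℕ) (F : Fin m → ℕ) (hle : ∀ i, F i ≤ c) (h : m * c ≤ ∑ i, F i) :
    ∀ i, F i = c := by
  have h2 : ∑ i : Fin m, F i ≤ ∑ _i : Fin m, c := Finset.sum_le_sum fun i _ => hle i
  rw [Finset.sum_const, Finset.card_univ, Fintype.card_fin, smul_eq_mul] at h2
  have heq : ∑ i : Fin m, F i = ∑ _i : Fin m, c := by
    rw [Finset.sum_const, Finset.card_univ, Fintype.card_fin, smul_eq_mul]
    omega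
  have hall := (Finset.sum_eq_sum_iff_of_le (s := Finset.univ) (f := F)
    (g := fun _ : Fin m => c) (fun i _ => hle i)).mp heq
  intro i
  exact hall i (Finset.mem_univ i)

lemma no_partition_case (m θ : ℕ) (hθ : 0 < θ) (S : Fin (m + 2) → ℕ) (i0 : Fin m)
    (htot : ∑ p, S p = m * θ) (h1 : θ ≤ S ⟨(i0 : ℕ), by omega⟩)
    (h2 : m * θ ≤ S ⟨m, by omega⟩) : False := by
  have hne : (⟨m, by omega⟩ : Fin (m + 2)) ≠ ⟨(i0 : ℕ), by omega⟩ := by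
    intro h
    rw [Fin.ext_iff] at h
    simp only at h
    omega
  have hbmem : (⟨m, by omega⟩ : Fin (m + 2)) ∈
      Finset.univ.erase (⟨(i0 : ℕ), by omega⟩ : Fin (m + 2)) :=
    Finset.mem_erase.mpr ⟨hne, Finset.mem_univ _⟩
  have h3 : S ⟨m, by omega⟩ ≤ ∑ p ∈ Finset.univ.erase (⟨(i0 : ℕ), by omega⟩ : Fin (m + 2)), S p :=
    Finset.single_le_sum (fun _ _ => Nat.zero_le _) hbmem
  have h4 : S ⟨(i0 : ℕ), by omega⟩ +
      ∑ p ∈ Finset.univ.erase (⟨(i0 : ℕ), by omega⟩ : Fin (m + 2)), S p = ∑ p, S p :=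
    Finset.add_sum_erase _ _ (Finset.mem_univ _)
  omega

lemma partition_of_caps (m θ : ℕ) (S : Fin (m + 2) → ℕ)
    (htot : ∑ p, S p = m * θ)
    (hSi : ∀ i : Fin m, θ ≤ S ⟨(i : ℕ), by omega⟩) :
    (∀ i : Fin m, S ⟨(i : ℕ), by omega⟩ = θ) ∧ S ⟨m, by omega⟩ = 0 := by
  set g : Fin m → Fin (m + 2) := fun i => ⟨(i : ℕ), by omega⟩ with hg
  have hinj : ∀ x ∈ (Finset.univ : Finset (Fin m)), ∀ y ∈ Finset.univ, g x = g y → x = y := by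
    intro x _ y _ h
    rw [Fin.ext_iff] at h ⊢
    exact h
  have himg : ∑ p ∈ Finset.image g Finset.univ, S p = ∑ i : Fin m, S (g i) :=
    Finset.sum_image hinj
  have hsd : ∑ p ∈ Finset.univ \ Finset.image g Finset.univ, S p +
      ∑ p ∈ Finset.image g Finset.univ, S p = ∑ p, S p :=
    Finset.sum_sdiff (Finset.subset_univ _)
  have hlow : m * θ ≤ ∑ i : Fin m, S (g i) := by
    calc m * θ = ∑ _i : Fin m, θ := by
          rw [Finset.sum_const, Finset.card_univ, Fintype.card_fin, smul_eq_mul, mul_comm]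
      _ ≤ _ := Finset.sum_le_sum fun i _ => hSi i
  have hpMmem : (⟨m, by omega⟩ : Fin (m + 2)) ∈
      Finset.univ \ Finset.image g Finset.univ := by
    simp only [Finset.mem_sdiff, Finset.mem_univ, true_and, Finset.mem_image, not_exists]
    intro i
    rw [hg]
    intro h
    rw [Fin.ext_iff] at h
    simp only at h
    omega
  have h0 : S ⟨m, by omega⟩ ≤ ∑ p ∈ Finset.univ \ Finset.image g Finset.univ, S p :=
    Finset.single_le_sum (fun _ _ => Nat.zero_le _) hpMmem
  have heq : ∑ i : Fin m, S (g i) = m * θ := by omega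
  constructor
  · have hsumeq : ∑ _i : Fin m, θ = ∑ i : Fin m, S (g i) := by
      rw [heq, Finset.sum_const, Finset.card_univ, Fintype.card_fin, smul_eq_mul, mul_comm]
    have hall := (Finset.sum_eq_sum_iff_of_le (s := Finset.univ) (f := fun _ : Fin m => θ)
      (g := fun i : Fin m => S (g i)) (fun i _ => hSi i)).mp hsumeq
    intro i
    exact (hall i (Finset.mem_univ i)).symm
  · omega

/-- `(Y, μ)` is feasible, and `(s*, p_{m+2})` is a claiming pair iff the
4-Partition instance `W` admits a partition into `m` subsets each summing to `θ`. -/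
theorem claiming_pair_iff_fourPartition
    (m θ : ℕ) (w : Fin (4 * m) → ℕ)
    (hm : 0 < m) (hθ : 0 < θ) (hw : ∀ i, 0 < w i)
    (hsum : ∑ i, w i = m * θ)
    (hlow : ∀ i, θ < 5 * w i) (hhigh : ∀ i, 3 * w i < θ) :
    (hardSPR m θ w hm hθ hw).Feasible (Y8 m θ hm) (μ8 m) ∧
    ((hardSPR m θ w hm hθ hw).ClaimingPair (Y8 m θ hm) (sstar m θ hm) ⟨m + 1, by omega⟩ ↔
      ∃ f : Fin (4 * m) → Fin m, ∀ j : Fin m,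
        ∑ i ∈ Finset.univ.filter (fun i => f i = j), w i = θ) := by
  classical
  have pmlt : m < m + 2 := by omega
  have pm1lt : m + 1 < m + 2 := by omega
  have hilt : ∀ n : ℕ, n < m → n < m + 2 := fun n h => by omega
  -- `Y'` below is the everyone-matched matching
  have hmatch : (hardSPR m θ w hm hθ hw).IsMatching (fun s : Stud8 m θ => some (proj8 s)) := by
    intro s p hp
    obtain rfl := Option.some.inj hp
    constructor
    · show (hardSPR m θ w hm hθ hw).prefS s (some (proj8 s)) none
      simp [hardSPR]
    · show (hardSPR m θ w hm hθ hw).prefP (proj8 s) (some s) none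
      simp [hardSPR]
  have hY' : ∀ (inst : DecidableEq (Stud8 m θ)) (h : m + 1 < m + 2),
      @Function.update (Stud8 m θ) (fun _ => Option (Fin (m + 2))) inst
          (Y8 m θ hm) (sstar m θ hm) (some ⟨m + 1, h⟩) =
        fun s : Stud8 m θ => some (proj8 s) := by
    intro inst h
    funext s
    by_cases hs : s = sstar m θ hm
    · subst hs
      rw [Function.update_self]
      rfl
    · rw [Function.update_of_ne hs]
      simp [Y8, hs]
  have hfeas : (hardSPR m θ w hm hθ hw).Feasible (Y8 m θ hm) (μ8 m) := by
    refine ⟨?_, ?_, ?_⟩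
    · intro s p hp
      simp only [Y8] at hp
      rcases eq_or_ne s (sstar m θ hm) with h | h
      · rw [if_pos h] at hp
        exact absurd hp (by simp)
      · rw [if_neg h] at hp
        exact hmatch s p hp
    · rintro (i | j | u)
      · show _ ∈ (hardSPR m θ w hm hθ hw).T _
        simp [hardSPR, μ8]
      · show _ ∈ (hardSPR m θ w hm hθ hw).T _
        simp [hardSPR, μ8]
      · show _ ∈ (hardSPR m θ w hm hθ hw).T _
        simp [hardSPR, μ8]
    · intro p
      have hle : SPR.assigned (Y8 m θ hm) p ≤
          SPR.assigned (fun s : Stud8 m θ => some (proj8 s)) p := by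
        refine assigned_mono _ _ _ fun s hs => ?_
        simp only [Y8] at hs
        rcases eq_or_ne s (sstar m θ hm) with h | h
        · rw [if_pos h] at hs
          exact absurd hs (by simp)
        · rw [if_neg h] at hs
          exact hs
      rw [hard_cap_split]
      have e1 : (∑ i : Fin m, if μ8 m (Sum.inl i) = p then θ + 1 else 0) =
          if (p : ℕ) < m then θ + 1 else 0 := by
        rw [← sum_fin_ite']
        refine Finset.sum_congr rfl fun i _ => ?_
        by_cases h1 : μ8 m (Sum.inl i) = p
        · rw [if_pos h1, if_pos (by rw [← h1]; rfl)]
        · rw [if_neg h1, if_neg (fun h2 => h1 (Fin.ext h2.symm))]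
      have e2 : (∑ j : Fin (4 * m), if μ8 m (Sum.inr (Sum.inl j)) = p then w j else 0) =
          if (p : ℕ) = m then m * θ else 0 := by
        by_cases hc : (p : ℕ) = m
        · rw [if_pos hc, ← hsum]
          refine Finset.sum_congr rfl fun j _ => ?_
          rw [if_pos]
          exact Fin.ext hc.symm
        · rw [if_neg hc]
          refine Finset.sum_eq_zero fun j _ => ?_
          refine if_neg fun h => hc ?_
          rw [← h]
          rfl
      have e3 : (if μ8 m (Sum.inr (Sum.inr ())) = p then m * θ + m - 1 else 0) =
          if (p : ℕ) = m + 1 then m * θ + m - 1 else 0 := by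
        by_cases h1 : μ8 m (Sum.inr (Sum.inr ())) = p
        · rw [if_pos h1, if_pos (by rw [← h1]; rfl)]
        · rw [if_neg h1, if_neg (fun h2 => h1 (Fin.ext h2.symm))]
      rw [e1, e2, e3]
      by_cases hp1 : (p : ℕ) = m + 1
      · have hcard : SPR.assigned (Y8 m θ hm) p + 1 ≤
            SPR.assigned (fun s : Stud8 m θ => some (proj8 s)) p := by
          refine assigned_lt _ _ _ (sstar m θ hm) (fun s hs => ?_) ?_ ?_
          · simp only [Y8] at hs
            rcases eq_or_ne s (sstar m θ hm) with h | h
            · rw [if_pos h] at hs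
              exact absurd hs (by simp)
            · rw [if_neg h] at hs
              exact hs
          · simp [Y8]
          · refine congrArg some (Fin.ext ?_)
            show m + 1 = (p : ℕ)
            omega
        rw [hard_assigned_proj, if_neg (by omega), if_neg (by omega), if_pos hp1] at hcard
        rw [if_neg (by omega : ¬((p : ℕ) < m)), if_neg (by omega : ¬((p : ℕ) = m)),
          if_pos hp1]
        omega
      · rw [if_neg hp1]
        rw [hard_assigned_proj] at hle
        split_ifs at hle ⊢ <;> omega
  refine ⟨hfeas, ?_, ?_⟩
  · -- forward direction
    rintro ⟨-, -, -, μ', hfeas'⟩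
    rw [hY' _ pm1lt] at hfeas'
    obtain ⟨-, halloc, hcap⟩ := hfeas'
    have hA : ∀ i : Fin m, μ' (Sum.inl i) = (⟨(i : ℕ), hilt _ i.2⟩ : Fin (m + 2)) ∨
        μ' (Sum.inl i) = (⟨m + 1, pm1lt⟩ : Fin (m + 2)) := by
      intro i
      have h := halloc (Sum.inl i)
      simp only [hardSPR, Set.mem_setOf_eq] at h
      rcases h with h | h
      · exact Or.inl (Fin.ext h)
      · exact Or.inr (Fin.ext h)
    have hWc : ∀ j : Fin (4 * m), ((μ' (Sum.inr (Sum.inl j)) : Fin (m + 2)) : ℕ) ≤ m := by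
      intro j
      have h := halloc (Sum.inr (Sum.inl j))
      simpa only [hardSPR, Set.mem_setOf_eq] using h
    have hZ : ((μ' (Sum.inr (Sum.inr ())) : Fin (m + 2)) : ℕ) = m ∨
        ((μ' (Sum.inr (Sum.inr ())) : Fin (m + 2)) : ℕ) = m + 1 := by
      have h := halloc (Sum.inr (Sum.inr ()))
      simpa only [hardSPR, Set.mem_setOf_eq] using h
    have hC : ∀ (v : ℕ) (hv : v < m + 2),
        (if v < m then θ else 0) + (if v = m then m * θ else 0) +
          (if v = m + 1 then m * θ + m else 0) ≤
        (∑ i : Fin m, if μ' (Sum.inl i) = (⟨v, hv⟩ : Fin (m + 2)) then θ + 1 else 0) +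
          ((∑ j : Fin (4 * m),
              if μ' (Sum.inr (Sum.inl j)) = (⟨v, hv⟩ : Fin (m + 2)) then w j else 0) +
          (if μ' (Sum.inr (Sum.inr ())) = (⟨v, hv⟩ : Fin (m + 2)) then m * θ + m - 1 else 0)) := by
      intro v hv
      have h := hcap ⟨v, hv⟩
      rwa [hard_cap_split, hard_assigned_proj] at h
    have htot : ∑ p : Fin (m + 2),
        (∑ j : Fin (4 * m), if μ' (Sum.inr (Sum.inl j)) = p then w j else 0) = m * θ := by
      rw [← hsum, Finset.sum_comm]
      refine Finset.sum_congr rfl fun j _ => ?_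
      rw [Finset.sum_ite_eq]
      simp
    rcases hZ with hz | hz
    · -- r_z allocated to p_m : extract a partition
      have hzp : μ' (Sum.inr (Sum.inr ())) = (⟨m, pmlt⟩ : Fin (m + 2)) := Fin.ext hz
      have hzne : μ' (Sum.inr (Sum.inr ())) ≠ (⟨m + 1, pm1lt⟩ : Fin (m + 2)) := by
        intro hq
        rw [hzp] at hq
        have : (m : ℕ) = m + 1 := by simpa [Fin.ext_iff] using hq
        omega
      have hS1 : (∑ j : Fin (4 * m),
          if μ' (Sum.inr (Sum.inl j)) = (⟨m + 1, pm1lt⟩ : Fin (m + 2)) then w j else 0) = 0 :=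
        Finset.sum_eq_zero fun j _ => by
          refine if_neg fun hq => ?_
          have h3 := hWc j
          rw [hq] at h3
          have h4 : m + 1 ≤ m := h3
          omega
      have h1 := hC (m + 1) pm1lt
      rw [if_neg (by omega : ¬(m + 1 < m)), if_neg (by omega : ¬(m + 1 = m)),
        if_pos (rfl : m + 1 = m + 1), hS1, if_neg hzne] at h1
      -- every r_{x_i} is allocated to p_{m+1}
      have hall : ∀ i : Fin m, μ' (Sum.inl i) = (⟨m + 1, pm1lt⟩ : Fin (m + 2)) := by
        have hmax := all_max m (θ + 1)
          (fun i : Fin m =>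
            if μ' (Sum.inl i) = (⟨m + 1, pm1lt⟩ : Fin (m + 2)) then θ + 1 else 0)
          (fun i => by split <;> omega)
          (by
            have hd : m * (θ + 1) = m * θ + m := by ring
            show m * (θ + 1) ≤ ∑ i : Fin m,
              if μ' (Sum.inl i) = (⟨m + 1, pm1lt⟩ : Fin (m + 2)) then θ + 1 else 0
            omega)
        intro i
        have h5 := hmax i
        by_cases hq : μ' (Sum.inl i) = (⟨m + 1, pm1lt⟩ : Fin (m + 2))
        · exact hq
        · rw [if_neg hq] at h5
          omega
      have hSi : ∀ i : Fin m, θ ≤ ∑ j : Fin (4 * m),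
          if μ' (Sum.inr (Sum.inl j)) = (⟨(i : ℕ), hilt _ i.2⟩ : Fin (m + 2)) then w j else 0 := by
        intro i
        have h2 := hC (i : ℕ) (hilt _ i.2)
        rw [if_pos (by omega : (i : ℕ) < m), if_neg (by omega : ¬((i : ℕ) = m)),
          if_neg (by omega : ¬((i : ℕ) = m + 1))] at h2
        have hz1 : (∑ i' : Fin m,
            if μ' (Sum.inl i') = (⟨(i : ℕ), hilt _ i.2⟩ : Fin (m + 2)) then θ + 1 else 0) = 0 :=
          Finset.sum_eq_zero fun i' _ => by
            rw [hall i']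
            refine if_neg fun hq => ?_
            have : m + 1 = (i : ℕ) := by simpa [Fin.ext_iff] using hq
            omega
        have hz2 : (if μ' (Sum.inr (Sum.inr ())) = (⟨(i : ℕ), hilt _ i.2⟩ : Fin (m + 2))
            then m * θ + m - 1 else 0) = 0 := by
          rw [hzp]
          refine if_neg fun hq => ?_
          have : (m : ℕ) = (i : ℕ) := by simpa [Fin.ext_iff] using hq
          omega
        rw [hz1, hz2] at h2
        omega
      obtain ⟨heach, hzero⟩ := partition_of_caps m θ
        (fun p => ∑ j : Fin (4 * m), if μ' (Sum.inr (Sum.inl j)) = p then w j else 0) htot hSi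
      have hnotM : ∀ j : Fin (4 * m),
          μ' (Sum.inr (Sum.inl j)) ≠ (⟨m, pmlt⟩ : Fin (m + 2)) := by
        intro j hq
        have hj : (if μ' (Sum.inr (Sum.inl j)) = (⟨m, pmlt⟩ : Fin (m + 2)) then w j else 0) ≤
            ∑ j' : Fin (4 * m),
              if μ' (Sum.inr (Sum.inl j')) = (⟨m, pmlt⟩ : Fin (m + 2)) then w j' else 0 :=
          Finset.single_le_sum (f := fun j' : Fin (4 * m) =>
            if μ' (Sum.inr (Sum.inl j')) = (⟨m, pmlt⟩ : Fin (m + 2)) then w j' else 0)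
            (fun _ _ => Nat.zero_le _) (Finset.mem_univ j)
        rw [if_pos hq] at hj
        have hz0 : (∑ j' : Fin (4 * m),
            if μ' (Sum.inr (Sum.inl j')) = (⟨m, pmlt⟩ : Fin (m + 2)) then w j' else 0) = 0 :=
          hzero
        have := hw j
        omega
      have hlt : ∀ j : Fin (4 * m), ((μ' (Sum.inr (Sum.inl j)) : Fin (m + 2)) : ℕ) < m := by
        intro j
        have h1' := hWc j
        rcases Nat.lt_or_ge ((μ' (Sum.inr (Sum.inl j)) : Fin (m + 2)) : ℕ) m with h | h
        · exact h
        · exact absurd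
            (Fin.ext (by omega : ((μ' (Sum.inr (Sum.inl j)) : Fin (m + 2)) : ℕ) = m))
            (hnotM j)
      refine ⟨fun j => ⟨((μ' (Sum.inr (Sum.inl j)) : Fin (m + 2)) : ℕ), hlt j⟩, fun j0 => ?_⟩
      rw [Finset.sum_filter]
      have hcg : ∀ j : Fin (4 * m),
          (if (⟨((μ' (Sum.inr (Sum.inl j)) : Fin (m + 2)) : ℕ), hlt j⟩ : Fin m) = j0
            then w j else 0) =
          (if μ' (Sum.inr (Sum.inl j)) = (⟨(j0 : ℕ), hilt _ j0.2⟩ : Fin (m + 2))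
            then w j else 0) := by
        intro j
        refine if_congr ?_ rfl rfl
        rw [Fin.ext_iff, Fin.ext_iff]
      rw [Finset.sum_congr rfl fun j _ => hcg j]
      exact heach j0
    · -- r_z allocated to p_{m+1} : contradiction
      exfalso
      have hzp : μ' (Sum.inr (Sum.inr ())) = (⟨m + 1, pm1lt⟩ : Fin (m + 2)) := Fin.ext hz
      have h1 := hC m pmlt
      rw [if_neg (by omega : ¬(m < m)), if_pos (rfl : (m : ℕ) = m),
        if_neg (by omega : ¬(m = m + 1))] at h1
      have hz1 : (∑ i : Fin m,
          if μ' (Sum.inl i) = (⟨m, pmlt⟩ : Fin (m + 2)) then θ + 1 else 0) = 0 :=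
        Finset.sum_eq_zero fun i _ => by
          rcases hA i with h | h <;> rw [h] <;> refine if_neg fun hq => ?_
          · have : (i : ℕ) = m := by simpa [Fin.ext_iff] using hq
            omega
          · have : m + 1 = m := by simpa [Fin.ext_iff] using hq
            omega
      have hz2 : (if μ' (Sum.inr (Sum.inr ())) = (⟨m, pmlt⟩ : Fin (m + 2))
          then m * θ + m - 1 else 0) = 0 := by
        rw [hzp]
        refine if_neg fun hq => ?_
        have : m + 1 = m := by simpa [Fin.ext_iff] using hq
        omega
      rw [hz1, hz2] at h1
      have h2 := hC (m + 1) pm1lt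
      rw [if_neg (by omega : ¬(m + 1 < m)), if_neg (by omega : ¬(m + 1 = m)),
        if_pos (rfl : m + 1 = m + 1), if_pos hzp] at h2
      have hS1 : (∑ j : Fin (4 * m),
          if μ' (Sum.inr (Sum.inl j)) = (⟨m + 1, pm1lt⟩ : Fin (m + 2)) then w j else 0) = 0 :=
        Finset.sum_eq_zero fun j _ => by
          refine if_neg fun hq => ?_
          have h3 := hWc j
          rw [hq] at h3
          have h4 : m + 1 ≤ m := h3
          omega
      rw [hS1] at h2
      have hex : ∃ i0 : Fin m, μ' (Sum.inl i0) = (⟨m + 1, pm1lt⟩ : Fin (m + 2)) := by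
        by_contra hc
        push_neg at hc
        have h5 : (∑ i : Fin m,
            if μ' (Sum.inl i) = (⟨m + 1, pm1lt⟩ : Fin (m + 2)) then θ + 1 else 0) = 0 :=
          Finset.sum_eq_zero fun i _ => if_neg (hc i)
        rw [h5] at h2
        have hmθ : 0 < m * θ := Nat.mul_pos hm hθ
        omega
      obtain ⟨i0, hi0⟩ := hex
      have h3 := hC (i0 : ℕ) (hilt _ i0.2)
      rw [if_pos (by omega : (i0 : ℕ) < m), if_neg (by omega : ¬((i0 : ℕ) = m)),
        if_neg (by omega : ¬((i0 : ℕ) = m + 1))] at h3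
      have hz3 : (∑ i : Fin m,
          if μ' (Sum.inl i) = (⟨(i0 : ℕ), hilt _ i0.2⟩ : Fin (m + 2)) then θ + 1 else 0) = 0 :=
        Finset.sum_eq_zero fun i _ => by
          by_cases hii : i = i0
          · subst hii
            rw [hi0]
            refine if_neg fun hq => ?_
            have : m + 1 = (i : ℕ) := by simpa [Fin.ext_iff] using hq
            omega
          · rcases hA i with h | h <;> rw [h] <;> refine if_neg fun hq => ?_
            · have : (i : ℕ) = (i0 : ℕ) := by simpa [Fin.ext_iff] using hq
              exact hii (Fin.ext this)
            · have : m + 1 = (i0 : ℕ) := by simpa [Fin.ext_iff] using hq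
              omega
      have hz4 : (if μ' (Sum.inr (Sum.inr ())) = (⟨(i0 : ℕ), hilt _ i0.2⟩ : Fin (m + 2))
          then m * θ + m - 1 else 0) = 0 := by
        rw [hzp]
        refine if_neg fun hq => ?_
        have : m + 1 = (i0 : ℕ) := by simpa [Fin.ext_iff] using hq
        omega
      rw [hz3, hz4] at h3
      refine no_partition_case m θ hθ
        (fun p => ∑ j : Fin (4 * m), if μ' (Sum.inr (Sum.inl j)) = p then w j else 0) i0 htot
        (by simpa using h3) (by simpa using h1)
  · -- backward direction
    rintro ⟨f, hf⟩
    refine ⟨?_, ?_, ?_, ?_⟩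
    · show (hardSPR m θ w hm hθ hw).prefP _ (some (sstar m θ hm)) none
      simp [hardSPR, sstar, proj8]
    · simp [Y8]
    · show (hardSPR m θ w hm hθ hw).prefS _ (some _) (Y8 m θ hm (sstar m θ hm))
      simp [hardSPR, Y8, sstar, proj8]
    · refine ⟨fun r => match r with
        | Sum.inl _ => (⟨m + 1, pm1lt⟩ : Fin (m + 2))
        | Sum.inr (Sum.inl j) => (⟨((f j) : ℕ), hilt _ (f j).2⟩ : Fin (m + 2))
        | Sum.inr (Sum.inr _) => (⟨m, pmlt⟩ : Fin (m + 2)), ?_⟩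
      rw [hY' _ pm1lt]
      refine ⟨hmatch, ?_, ?_⟩
      · rintro (i | j | u)
        · show _ ∈ (hardSPR m θ w hm hθ hw).T _
          simp [hardSPR]
        · show _ ∈ (hardSPR m θ w hm hθ hw).T _
          have h2 := (f j).2
          simp only [hardSPR, Set.mem_setOf_eq]
          omega
        · show _ ∈ (hardSPR m θ w hm hθ hw).T _
          simp [hardSPR]
      · intro p
        rw [hard_assigned_proj, hard_cap_split]
        dsimp only
        simp only [ite_fin_eq]
        have c1 : (∑ _i : Fin m, if (p : ℕ) = m + 1 then θ + 1 else 0) =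
            if (p : ℕ) = m + 1 then m * (θ + 1) else 0 := by
          by_cases h : (p : ℕ) = m + 1
          · have hb : (∑ _i : Fin m, if (p : ℕ) = m + 1 then θ + 1 else 0) =
                ∑ _i : Fin m, (θ + 1) := Finset.sum_congr rfl fun i _ => if_pos h
            rw [hb, if_pos h, Finset.sum_const, Finset.card_univ, Fintype.card_fin, smul_eq_mul]
          · have hb : (∑ _i : Fin m, if (p : ℕ) = m + 1 then θ + 1 else 0) = 0 :=
              Finset.sum_eq_zero fun i _ => if_neg h
            rw [hb, if_neg h]
        have c2 : (∑ j : Fin (4 * m), if (p : ℕ) = ((f j : Fin m) : ℕ) then w j else 0) =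
            if (p : ℕ) < m then θ else 0 := by
          by_cases hp : (p : ℕ) < m
          · rw [if_pos hp, ← hf ⟨(p : ℕ), hp⟩, Finset.sum_filter]
            refine Finset.sum_congr rfl fun j _ => if_congr ?_ rfl rfl
            rw [Fin.ext_iff]
            constructor <;> (intro h; exact h.symm)
          · rw [if_neg hp]
            refine Finset.sum_eq_zero fun j _ => if_neg fun h => ?_
            have := (f j).2
            omega
        rw [c1, c2]
        have hd : m * (θ + 1) = m * θ + m := by ring
        split_ifs <;> omega
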